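/- For every m≥1, the sum N_m^Γ := Σ_ξ ℓ(ξ)/S(ξ), taken over all Γ-equivalence classes ξ of reduced cycles of length m, converges, and Tr_Γ(T^m) = N_m^Γ. -/

import Mathlib

noncomputable section

/-- `c : ℕ → E` is (the edge sequence of) a closed path of length `m`: it is `m`-periodic
and consecutive edges match up. -/
def IsClosedPath {V E : Type*} (o t : E → V) (m : ℕ) (c : ℕ → E) : Prop :=
  (∀ i, t (c i) = o (c (i + 1))) ∧ (∀ i, c (i + m) = c i)

/-- Reduced (proper and tail-less) closed path: cyclically, no edge is followed by its
reverse. -/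
def IsReducedPath {E : Type*} (bar : E → E) (c : ℕ → E) : Prop :=
  ∀ i, c (i + 1) ≠ bar (c i)

/-- The effective length of a closed path: the length of the underlying prime cycle. -/
def effLen {E : Type*} (c : ℕ → E) : ℕ :=
  sInf {p : ℕ | 0 < p ∧ ∀ i, c (i + p) = c i}

/-- The stabilizer in `Γ` of the cycle determined by the closed path `c`. -/
def cycStab (Γ : Type*) {E : Type*} [Group Γ] [MulAction Γ E] (c : ℕ → E) : Set Γ :=
  {γ : Γ | ∃ k : ℕ, ∀ i, γ • c i = c (i + k)}

namespace TraceAux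

/-- `p` is a period of `c`. -/
def IsPer {E : Type*} (c : ℕ → E) (p : ℕ) : Prop := ∀ i, c (i + p) = c i

variable {E : Type*}

theorem isPer_mul {c : ℕ → E} {p : ℕ} (h : IsPer c p) (a : ℕ) : ∀ i, c (i + a * p) = c i := by
  intro i
  induction a with
  | zero => simp
  | succ n ih =>
    have : i + (n + 1) * p = (i + n * p) + p := by ring
    rw [this, h, ih]

theorem isPer_mod {c : ℕ → E} {p : ℕ} (h : IsPer c p) (i : ℕ) : c i = c (i % p) := by
  have hd := Nat.mod_add_div' i p
  conv_lhs => rw [show i = i % p + (i / p) * p from by omega]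
  rw [isPer_mul h]

section effLen

variable {c : ℕ → E} {m : ℕ} (hm : 0 < m) (hc : IsPer c m)
include hm hc

theorem effLen_mem : 0 < effLen c ∧ IsPer c (effLen c) :=
  Nat.sInf_mem (⟨m, hm, hc⟩ : {p : ℕ | 0 < p ∧ ∀ i, c (i + p) = c i}.Nonempty)

theorem effLen_dvd {p : ℕ} (hp : IsPer c p) : effLen c ∣ p := by
  obtain ⟨hl0, hl⟩ := effLen_mem hm hc
  set l := effLen c with hldef
  by_contra hnd
  have hmod : 0 < p % l := by
    rcases Nat.eq_zero_or_pos (p % l) with h0 | h0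
    · exact absurd (Nat.dvd_of_mod_eq_zero h0) hnd
    · exact h0
  have hper : IsPer c (p % l) := by
    intro i
    have h1 : c (i + p % l + (p / l) * l) = c (i + p % l) := isPer_mul hl _ _
    have h2 : i + p % l + (p / l) * l = i + p := by
      have := Nat.mod_add_div' p l
      omega
    rw [h2] at h1
    rw [← h1, hp]
  have : l ≤ p % l := Nat.sInf_le ⟨hmod, hper⟩
  have : p % l < l := Nat.mod_lt _ hl0
  omega

theorem shift_eq_of_mod {k k' : ℕ} (h : k % effLen c = k' % effLen c) :
    ∀ i, c (i + k) = c (i + k') := by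
  obtain ⟨hl0, hl⟩ := effLen_mem hm hc
  intro i
  have e1 : c (i + k) = c ((i + k) % effLen c) := isPer_mod hl _
  have e2 : c (i + k') = c ((i + k') % effLen c) := isPer_mod hl _
  rw [e1, e2, Nat.add_mod, h, ← Nat.add_mod]

theorem mod_eq_of_shift {k k' : ℕ} (h : ∀ i, c (i + k) = c (i + k')) :
    k % effLen c = k' % effLen c := by
  obtain ⟨hl0, hl⟩ := effLen_mem hm hc
  -- wlog k' ≤ k
  rcases le_total k' k with hle | hle
  · -- k - k' is a period
    have hper : IsPer c (k - k') := by
      intro j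
      -- choose a with j + a*m ≥ k'
      obtain ⟨a, ha⟩ : ∃ a, k' ≤ j + a * m := ⟨k', by nlinarith⟩
      have hj : c (j + (k - k')) = c (j + a * m + (k - k')) := by
        have : j + (k - k') + a * m = j + a * m + (k - k') := by ring
        rw [← isPer_mul hc a (j + (k - k')), this]
      have hj2 : c (j + a * m + (k - k')) = c (j + a * m) := by
        set i := j + a * m - k'
        have hik : i + k = j + a * m + (k - k') := by omega
        have hik' : i + k' = j + a * m := by omega
        rw [← hik, ← hik', h]
      rw [hj, hj2, isPer_mul hc]
    obtain ⟨q, hq⟩ := effLen_dvd hm hc hper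
    have hk : k = k' + effLen c * q := by omega
    rw [hk, Nat.add_mul_mod_self_left]
  · have hper : IsPer c (k' - k) := by
      intro j
      obtain ⟨a, ha⟩ : ∃ a, k ≤ j + a * m := ⟨k, by nlinarith⟩
      have hj : c (j + (k' - k)) = c (j + a * m + (k' - k)) := by
        have : j + (k' - k) + a * m = j + a * m + (k' - k) := by ring
        rw [← isPer_mul hc a (j + (k' - k)), this]
      have hj2 : c (j + a * m + (k' - k)) = c (j + a * m) := by
        set i := j + a * m - k
        have hik : i + k' = j + a * m + (k' - k) := by omega
        have hik' : i + k = j + a * m := by omega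
        rw [← hik, ← hik', h]
      rw [hj, hj2, isPer_mul hc]
    obtain ⟨q, hq⟩ := effLen_dvd hm hc hper
    have hk : k' = k + effLen c * q := by omega
    rw [hk, Nat.add_mul_mod_self_left]

end effLen

end TraceAux

namespace TraceAux2
open TraceAux
open scoped ENNReal NNReal

variable {V E Γ : Type*} [Group Γ] [MulAction Γ V] [MulAction Γ E]

/-- The relation of the statement. -/
def Rel (o t : E → V) (bar : E → E) (m : ℕ) (Γ : Type*) [Group Γ] [MulAction Γ E] :
    {c : ℕ → E // IsClosedPath o t m c ∧ IsReducedPath bar c} →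
      {c : ℕ → E // IsClosedPath o t m c ∧ IsReducedPath bar c} → Prop := fun c c' =>
  ∃ (γ : Γ) (k : ℕ), ∀ i, (c' : ℕ → E) i = γ • (c : ℕ → E) (i + k)

section RelFacts

variable {o t : E → V} {bar : E → E} {m : ℕ}

theorem closed_shift {c : ℕ → E} (hc : IsClosedPath o t m c) (k : ℕ) :
    IsClosedPath o t m (fun i => c (i + k)) := by
  refine ⟨fun i => ?_, fun i => ?_⟩
  · have := hc.1 (i + k); simpa [add_right_comm] using this
  · have := hc.2 (i + k); simpa [add_right_comm] using this

theorem reduced_shift {c : ℕ → E} (hc : IsReducedPath bar c) (k : ℕ) :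
    IsReducedPath bar (fun i => c (i + k)) := by
  intro i
  have := hc (i + k); simpa [add_right_comm] using this

theorem closed_smul (ho_smul : ∀ (γ : Γ) (e : E), o (γ • e) = γ • o e)
    (ht_smul : ∀ (γ : Γ) (e : E), t (γ • e) = γ • t e)
    {c : ℕ → E} (hc : IsClosedPath o t m c) (γ : Γ) :
    IsClosedPath o t m (fun i => γ • c i) := by
  refine ⟨fun i => ?_, fun i => ?_⟩
  · show t (γ • c i) = o (γ • c (i + 1))
    rw [ht_smul, ho_smul, hc.1]
  · show γ • c (i + m) = γ • c i
    rw [hc.2]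

theorem reduced_smul (hbar_smul : ∀ (γ : Γ) (e : E), bar (γ • e) = γ • bar e)
    {c : ℕ → E} (hc : IsReducedPath bar c) (γ : Γ) :
    IsReducedPath bar (fun i => γ • c i) := by
  intro i h
  simp only at h
  rw [hbar_smul] at h
  exact hc i (smul_left_cancel γ h)

theorem rel_equiv (hm : 0 < m) : Equivalence (Rel o t bar m Γ) := by
  constructor
  · intro c
    exact ⟨1, 0, fun i => by simp⟩
  · rintro c c' ⟨γ, k, h⟩
    refine ⟨γ⁻¹, m * (k + 1) - k, fun i => ?_⟩
    rw [h (i + (m * (k + 1) - k))]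
    have harith : i + (m * (k + 1) - k) + k = i + (k + 1) * m := by
      have h1 : k + 1 ≤ m * (k + 1) := Nat.le_mul_of_pos_left _ hm
      rw [Nat.mul_comm (k + 1) m]
      omega
    rw [harith, isPer_mul c.2.1.2, inv_smul_smul]
  · rintro c c' c'' ⟨γ, k, h⟩ ⟨γ', k', h'⟩
    refine ⟨γ' * γ, k' + k, fun i => ?_⟩
    rw [h' i, h (i + k'), mul_smul]
    ring_nf

end RelFacts

section Stab

variable {o : E → V}

theorem stab_edge_finite (hstab : ∀ v : V, Finite (MulAction.stabilizer Γ v))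
    (ho_smul : ∀ (γ : Γ) (e : E), o (γ • e) = γ • o e) (e : E) :
    Finite (MulAction.stabilizer Γ e) := by
  have hle : MulAction.stabilizer Γ e ≤ MulAction.stabilizer Γ (o e) := by
    intro γ hγ
    have h1 : γ • e = e := hγ
    show γ • o e = o e
    rw [← ho_smul, h1]
  have := hstab (o e)
  exact Finite.of_injective _ (Subgroup.inclusion_injective hle)

theorem card_stab_smul (γ : Γ) (e : E) :
    Nat.card (MulAction.stabilizer Γ (γ • e)) = Nat.card (MulAction.stabilizer Γ e) := by
  rw [MulAction.stabilizer_smul_eq_stabilizer_map_conj]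
  exact (Nat.card_congr (Subgroup.equivMapOfInjective _ _ (MulEquiv.injective _)).toEquiv).symm

/-- The weight function `e ↦ 1/|Γ_e|` supported on `F1`. -/
def Wt (Γ : Type*) [Group Γ] [MulAction Γ E] (F1 : Set E) : E → ℝ≥0∞ :=
  F1.indicator (fun x => ((Nat.card (MulAction.stabilizer Γ x) : ℝ≥0∞))⁻¹)

theorem orbit_weight_sum (hstab : ∀ v : V, Finite (MulAction.stabilizer Γ v))
    (ho_smul : ∀ (γ : Γ) (e : E), o (γ • e) = γ • o e)
    (F1 : Set E) (hF1 : ∀ e : E, ∃! f, f ∈ F1 ∧ ∃ γ : Γ, γ • e = f) (e : E) :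
    (∑' γ : Γ, Wt Γ F1 (γ • e)) = 1 := by
  obtain ⟨f, ⟨hfF1, γ₀, hγ₀⟩, huniq⟩ := hF1 e
  have hmem : ∀ γ : Γ, γ • e ∈ F1 ↔ γ • e = f := by
    intro γ
    constructor
    · intro h
      exact huniq (γ • e) ⟨h, γ, rfl⟩
    · intro h; rw [h]; exact hfF1
  have hfun : ∀ γ : Γ, Wt Γ F1 (γ • e)
      = Set.indicator {γ : Γ | γ • e = f}
        (fun _ => ((Nat.card (MulAction.stabilizer Γ e) : ℝ≥0∞))⁻¹) γ := by
    intro γ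
    by_cases h : γ • e = f
    · rw [Wt, Set.indicator_of_mem ((hmem γ).2 h), card_stab_smul,
        Set.indicator_of_mem (by exact h)]
    · rw [Wt, Set.indicator_of_notMem (fun hh => h ((hmem γ).1 hh)),
        Set.indicator_of_notMem (by exact h)]
  rw [tsum_congr hfun, ← tsum_subtype]
  have hequiv : ↥({γ : Γ | γ • e = f}) ≃ MulAction.stabilizer Γ e := by
    refine ⟨fun γ => ⟨γ₀⁻¹ * γ.1, ?_⟩, fun σ => ⟨γ₀ * σ.1, ?_⟩, ?_, ?_⟩
    · have h1 : (γ.1 : Γ) • e = f := γ.2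
      simp only [MulAction.mem_stabilizer_iff, mul_smul, h1, ← hγ₀, inv_smul_smul]
    · have h1 : (σ.1 : Γ) • e = e := σ.2
      show γ₀ * σ.1 ∈ {γ : Γ | γ • e = f}
      show (γ₀ * σ.1) • e = f
      rw [mul_smul, h1, hγ₀]
    · intro γ; ext; simp
    · intro σ; ext; simp
  haveI hfin : Finite (MulAction.stabilizer Γ e) := stab_edge_finite hstab ho_smul e
  haveI : Finite ↥({γ : Γ | γ • e = f}) := Finite.of_equiv _ hequiv.symm
  haveI : Fintype ↥({γ : Γ | γ • e = f}) := Fintype.ofFinite _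
  rw [tsum_fintype]
  rw [Finset.sum_const, nsmul_eq_mul, Finset.card_univ]
  have hc1 : Nat.card ↥({γ : Γ | γ • e = f}) = Nat.card (MulAction.stabilizer Γ e) :=
    Nat.card_congr hequiv
  have hcard : (Fintype.card ↥({γ : Γ | γ • e = f}) : ℝ≥0∞)
      = (Nat.card (MulAction.stabilizer Γ e) : ℝ≥0∞) := by
    rw [← Nat.card_eq_fintype_card, hc1]
  rw [hcard]
  have hpos : Nat.card (MulAction.stabilizer Γ e) ≠ 0 := Nat.card_pos.ne'
  exact ENNReal.mul_inv_cancel (by exact_mod_cast hpos) (by simp)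

end Stab

end TraceAux2

namespace TraceAux3
open TraceAux TraceAux2
open scoped ENNReal

variable {V E : Type*} [DecidableEq E]

section Seq

variable (o t : E → V) (bar : E → E)

/-- Backwards reduced sequences of length `k` from `e` to `f`, normalized beyond `k`. -/
def SeqT (k : ℕ) (e f : E) : Type _ :=
  {c : ℕ → E // c 0 = e ∧ (∀ i < k, t (c (i + 1)) = o (c i) ∧ c (i + 1) ≠ bar (c i)) ∧
    ∀ i, c (i + k) = f}

variable {o t bar}

theorem seqT_zero_card (e f : E) : Nat.card (SeqT o t bar 0 e f) = if e = f then 1 else 0 := by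
  by_cases h : e = f
  · subst h
    rw [if_pos rfl]
    haveI : Unique (SeqT o t bar 0 e e) := by
      refine ⟨⟨⟨fun _ => e, rfl, fun i hi => absurd hi (by omega), fun i => rfl⟩⟩, ?_⟩
      rintro ⟨c, hc0, _, hcn⟩
      apply Subtype.ext
      funext i
      exact (by simpa using hcn i : c i = e)
    exact Nat.card_unique
  · rw [if_neg h]
    haveI : IsEmpty (SeqT o t bar 0 e f) := by
      constructor
      rintro ⟨c, hc0, _, hcn⟩
      exact h (hc0.symm.trans (by simpa using hcn 0))
    exact Nat.card_of_isEmpty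

/-- Splitting off the first step of a sequence. -/
def seqTSuccEquiv (k : ℕ) (e f : E) :
    SeqT o t bar (k + 1) e f ≃ Σ e' : {e' : E // t e' = o e ∧ e' ≠ bar e}, SeqT o t bar k e'.1 f where
  toFun c :=
    ⟨⟨c.1 1, by
        have h := c.2.2.1 0 (by omega)
        rw [c.2.1] at h
        exact h⟩,
      ⟨fun i => c.1 (i + 1), rfl, fun i hi => by
          have h := c.2.2.1 (i + 1) (by omega)
          simpa [add_right_comm] using h,
        fun i => by
          have h := c.2.2.2 i
          simpa [add_right_comm, add_assoc] using h⟩⟩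
  invFun p :=
    ⟨fun i => match i with
      | 0 => e
      | Nat.succ j => p.2.1 j,
      rfl, fun i hi => by
        match i with
        | 0 =>
          show t (p.2.1 0) = o e ∧ p.2.1 0 ≠ bar e
          rw [p.2.2.1]
          exact p.1.2
        | Nat.succ j =>
          show t (p.2.1 (j + 1)) = o (p.2.1 j) ∧ p.2.1 (j + 1) ≠ bar (p.2.1 j)
          exact p.2.2.2.1 j (by omega),
      fun i => by
        show p.2.1 (i + k) = f
        exact p.2.2.2.2 i⟩
  left_inv c := by
    apply Subtype.ext
    funext i
    match i with
    | 0 => exact c.2.1.symm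
    | Nat.succ j => rfl
  right_inv p := by
    obtain ⟨⟨e', he'⟩, c, hc0, hcadj, hcn⟩ := p
    have h1 : c 0 = e' := hc0
    subst h1
    refine Sigma.ext rfl (heq_of_eq (Subtype.ext (funext fun i => ?_)))
    rfl

theorem adj_finite (hfib : ∀ v, {e : E | o e = v}.Finite)
    (hbar_invol : ∀ e, bar (bar e) = e) (ho_bar : ∀ e, o (bar e) = t e) (e : E) :
    Finite {e' : E // t e' = o e ∧ e' ≠ bar e} := by
  haveI : Finite {x : E // o x = o e} := (hfib (o e)).subset (fun x hx => hx) |>.to_subtype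
  refine Finite.of_injective (fun e' => (⟨bar e'.1, by rw [ho_bar]; exact e'.2.1⟩ :
    {x : E // o x = o e})) ?_
  intro a b hab
  apply Subtype.ext
  have : bar a.1 = bar b.1 := congrArg Subtype.val hab
  calc (a : E) = bar (bar a.1) := (hbar_invol _).symm
    _ = bar (bar b.1) := by rw [this]
    _ = b.1 := hbar_invol _

theorem seqT_finite (hfib : ∀ v, {e : E | o e = v}.Finite)
    (hbar_invol : ∀ e, bar (bar e) = e) (ho_bar : ∀ e, o (bar e) = t e) :
    ∀ (k : ℕ) (e f : E), Finite (SeqT o t bar k e f) := by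
  intro k
  induction k with
  | zero =>
    intro e f
    by_cases h : e = f
    · subst h
      haveI : Unique (SeqT o t bar 0 e e) := by
        refine ⟨⟨⟨fun _ => e, rfl, fun i hi => absurd hi (by omega), fun i => rfl⟩⟩, ?_⟩
        rintro ⟨c, hc0, _, hcn⟩
        apply Subtype.ext
        funext i
        exact (by simpa using hcn i : c i = e)
      infer_instance
    · haveI : IsEmpty (SeqT o t bar 0 e f) := by
        constructor
        rintro ⟨c, hc0, _, hcn⟩
        exact h (hc0.symm.trans (by simpa using hcn 0))
      infer_instance
  | succ k ih =>
    intro e f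
    haveI := adj_finite hfib hbar_invol ho_bar e
    haveI : ∀ e' : {e' : E // t e' = o e ∧ e' ≠ bar e}, Finite (SeqT o t bar k e'.1 f) :=
      fun e' => ih e'.1 f
    exact Finite.of_equiv _ (seqTSuccEquiv k e f).symm

theorem seqT_card_le (hfib : ∀ v, {e : E | o e = v}.Finite)
    (hbar_invol : ∀ e, bar (bar e) = e) (ho_bar : ∀ e, o (bar e) = t e)
    (d : ℕ) (hdeg : ∀ v, Nat.card {e : E // o e = v} ≤ d) :
    ∀ (k : ℕ) (e f : E), Nat.card (SeqT o t bar k e f) ≤ d ^ k := by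
  intro k
  induction k with
  | zero =>
    intro e f
    rw [seqT_zero_card]
    split <;> simp
  | succ k ih =>
    intro e f
    haveI : Finite {x : E // o x = o e} := (hfib (o e)).subset (fun x hx => hx) |>.to_subtype
    haveI hadj := adj_finite hfib hbar_invol ho_bar e
    haveI : ∀ e' : {e' : E // t e' = o e ∧ e' ≠ bar e}, Finite (SeqT o t bar k e'.1 f) :=
      fun e' => seqT_finite hfib hbar_invol ho_bar k e'.1 f
    haveI : Fintype {e' : E // t e' = o e ∧ e' ≠ bar e} := Fintype.ofFinite _
    haveI : ∀ e' : {e' : E // t e' = o e ∧ e' ≠ bar e}, Fintype (SeqT o t bar k e'.1 f) :=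
      fun e' => Fintype.ofFinite _
    rw [Nat.card_congr (seqTSuccEquiv k e f), Nat.card_eq_fintype_card, Fintype.card_sigma]
    have hadjcard : Fintype.card {e' : E // t e' = o e ∧ e' ≠ bar e} ≤ d := by
      rw [← Nat.card_eq_fintype_card]
      have hinj : Nat.card {e' : E // t e' = o e ∧ e' ≠ bar e} ≤ Nat.card {x : E // o x = o e} :=
        Nat.card_le_card_of_injective
          (fun e' => (⟨bar e'.1, by rw [ho_bar]; exact e'.2.1⟩ : {x : E // o x = o e}))
          (by
            intro a b hab
            apply Subtype.ext
            have h1 : bar a.1 = bar b.1 := congrArg Subtype.val hab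
            calc (a : E) = bar (bar a.1) := (hbar_invol _).symm
              _ = bar (bar b.1) := by rw [h1]
              _ = b.1 := hbar_invol _)
      exact hinj.trans (hdeg (o e))
    calc (∑ e' : {e' : E // t e' = o e ∧ e' ≠ bar e},
          Fintype.card (SeqT o t bar k e'.1 f))
        ≤ ∑ _e' : {e' : E // t e' = o e ∧ e' ≠ bar e}, d ^ k := by
          refine Finset.sum_le_sum fun e' _ => ?_
          rw [← Nat.card_eq_fintype_card]
          exact ih e'.1 f
      _ = Fintype.card {e' : E // t e' = o e ∧ e' ≠ bar e} * d ^ k := by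
          rw [Finset.sum_const, Finset.card_univ, smul_eq_mul]
      _ ≤ d * d ^ k := Nat.mul_le_mul_right _ hadjcard
      _ = d ^ (k + 1) := by ring

end Seq

end TraceAux3

namespace TraceAux3
open TraceAux TraceAux2
open scoped ENNReal

section Op

variable {V E : Type*} [DecidableEq E] {o t : E → V} {bar : E → E}

theorem pow_single_apply (hfib : ∀ v, {e : E | o e = v}.Finite)
    (hbar_invol : ∀ e, bar (bar e) = e) (ho_bar : ∀ e, o (bar e) = t e)
    (T : lp (fun _ : E => ℂ) 2 →L[ℂ] lp (fun _ : E => ℂ) 2)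
    (hT : ∀ (ω : lp (fun _ : E => ℂ) 2) (e : E),
      T ω e = ∑' e' : {e' : E // t e' = o e ∧ e' ≠ bar e}, ω (e' : E)) :
    ∀ (k : ℕ) (e f : E), ((T ^ k) (lp.single 2 f 1)) e = (Nat.card (SeqT o t bar k e f) : ℂ) := by
  intro k
  induction k with
  | zero =>
    intro e f
    rw [pow_zero, ContinuousLinearMap.one_apply, seqT_zero_card]
    by_cases h : e = f
    · subst h
      rw [lp.single_apply_self, if_pos rfl, Nat.cast_one]
    · rw [lp.single_apply_ne 2 f _ h, if_neg h, Nat.cast_zero]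
  | succ k ih =>
    intro e f
    haveI := adj_finite hfib hbar_invol ho_bar (o := o) (bar := bar) e
    haveI : Fintype {e' : E // t e' = o e ∧ e' ≠ bar e} := Fintype.ofFinite _
    haveI : ∀ e' : {e' : E // t e' = o e ∧ e' ≠ bar e}, Finite (SeqT o t bar k e'.1 f) :=
      fun e' => seqT_finite hfib hbar_invol ho_bar k e'.1 f
    haveI : ∀ e' : {e' : E // t e' = o e ∧ e' ≠ bar e}, Fintype (SeqT o t bar k e'.1 f) :=
      fun e' => Fintype.ofFinite _
    calc ((T ^ (k + 1)) (lp.single 2 f 1)) e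
        = (T ((T ^ k) (lp.single 2 f 1))) e := by rw [pow_succ', ContinuousLinearMap.mul_apply]
      _ = ∑' e' : {e' : E // t e' = o e ∧ e' ≠ bar e}, ((T ^ k) (lp.single 2 f 1)) e'.1 :=
          hT _ e
      _ = ∑ e' : {e' : E // t e' = o e ∧ e' ≠ bar e}, ((T ^ k) (lp.single 2 f 1)) e'.1 :=
          tsum_fintype _
      _ = ∑ e' : {e' : E // t e' = o e ∧ e' ≠ bar e},
            (Nat.card (SeqT o t bar k e'.1 f) : ℂ) :=
          Finset.sum_congr rfl fun e' _ => ih e'.1 f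
      _ = (Nat.card (SeqT o t bar (k + 1) e f) : ℂ) := by
          rw [Nat.card_congr (seqTSuccEquiv k e f), Nat.card_eq_fintype_card, Fintype.card_sigma]
          push_cast
          exact Finset.sum_congr rfl fun e' _ => by rw [Nat.card_eq_fintype_card]

end Op

end TraceAux3

namespace TraceAux3
open TraceAux TraceAux2

section Closed

variable {V E : Type*} [DecidableEq E] {o t : E → V} {bar : E → E} {m : ℕ}

/-- Closed reduced paths based at `e` correspond to backwards reduced sequences from `e`
to `e` of length `m`. -/
def closedEquiv (hm : 0 < m) (hbar_invol : ∀ e, bar (bar e) = e) (e : E) :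
    {c : {c : ℕ → E // IsClosedPath o t m c ∧ IsReducedPath bar c} // c.1 0 = e} ≃
      SeqT o t bar m e e where
  toFun c := by
    refine ⟨fun j => if j ≤ m then c.1.1 (m - j) else e, ?_, ?_, ?_⟩
    · show (if 0 ≤ m then c.1.1 (m - 0) else e) = e
      rw [if_pos (Nat.zero_le m), Nat.sub_zero]
      have h1 := c.1.2.1.2 0
      rw [zero_add] at h1
      rw [h1, c.2]
    · intro i hi
      show t (if i + 1 ≤ m then c.1.1 (m - (i + 1)) else e) =
          o (if i ≤ m then c.1.1 (m - i) else e) ∧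
          (if i + 1 ≤ m then c.1.1 (m - (i + 1)) else e) ≠
          bar (if i ≤ m then c.1.1 (m - i) else e)
      rw [if_pos (by omega : i + 1 ≤ m), if_pos (by omega : i ≤ m)]
      have hadj := c.1.2.1.1 (m - i - 1)
      have hred := c.1.2.2 (m - i - 1)
      have h1 : m - i - 1 + 1 = m - i := by omega
      rw [h1] at hadj hred
      have h2 : m - (i + 1) = m - i - 1 := by omega
      rw [h2]
      refine ⟨hadj, fun hEq => ?_⟩
      apply hred
      rw [← hbar_invol (c.1.1 (m - i)), ← hEq]
    · intro i
      show (if i + m ≤ m then c.1.1 (m - (i + m)) else e) = e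
      by_cases h : i = 0
      · subst h
        rw [zero_add, if_pos le_rfl, Nat.sub_self]
        exact c.2
      · rw [if_neg (by omega)]
  invFun c' := by
    refine ⟨⟨fun i => c'.1 (m - i % m), ⟨fun i => ?_, fun i => ?_⟩, fun i => ?_⟩, ?_⟩
    · -- adjacency
      show t (c'.1 (m - i % m)) = o (c'.1 (m - (i + 1) % m))
      have hs : i % m < m := Nat.mod_lt _ hm
      have hsucc : (i + 1) % m = (i % m + 1) % m := by
        conv_lhs => rw [show i + 1 = (i % m + 1) + (i / m) * m from by
          have := Nat.mod_add_div' i m; omega]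
        rw [Nat.add_mul_mod_self_right]
      by_cases hc : i % m + 1 = m
      · have h0 : (i + 1) % m = 0 := by rw [hsucc, hc, Nat.mod_self]
        rw [h0, Nat.sub_zero]
        have h1 : m - i % m = 1 := by omega
        rw [h1]
        have hm0 : c'.1 m = c'.1 0 := by
          have ha := c'.2.2.2 0
          rw [zero_add] at ha
          rw [ha, c'.2.1]
        rw [hm0]
        exact (c'.2.2.1 0 hm).1
      · have h0 : (i + 1) % m = i % m + 1 := by
          rw [hsucc, Nat.mod_eq_of_lt (by omega)]
        rw [h0]
        have hadj := (c'.2.2.1 (m - i % m - 1) (by omega)).1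
        have h1 : m - i % m - 1 + 1 = m - i % m := by omega
        rw [h1] at hadj
        have h2 : m - (i % m + 1) = m - i % m - 1 := by omega
        rw [h2]
        exact hadj
    · -- m-periodicity
      show c'.1 (m - (i + m) % m) = c'.1 (m - i % m)
      rw [Nat.add_mod_right]
    · -- reducedness
      show c'.1 (m - (i + 1) % m) ≠ bar (c'.1 (m - i % m))
      have hs : i % m < m := Nat.mod_lt _ hm
      have hsucc : (i + 1) % m = (i % m + 1) % m := by
        conv_lhs => rw [show i + 1 = (i % m + 1) + (i / m) * m from by
          have := Nat.mod_add_div' i m; omega]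
        rw [Nat.add_mul_mod_self_right]
      by_cases hc : i % m + 1 = m
      · have h0 : (i + 1) % m = 0 := by rw [hsucc, hc, Nat.mod_self]
        rw [h0, Nat.sub_zero]
        have h1 : m - i % m = 1 := by omega
        rw [h1]
        have hm0 : c'.1 m = c'.1 0 := by
          have ha := c'.2.2.2 0
          rw [zero_add] at ha
          rw [ha, c'.2.1]
        rw [hm0]
        intro hEq
        have hred := (c'.2.2.1 0 hm).2
        apply hred
        rw [← hbar_invol (c'.1 1), ← hEq]
      · have h0 : (i + 1) % m = i % m + 1 := by
          rw [hsucc, Nat.mod_eq_of_lt (by omega)]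
        rw [h0]
        have hred := (c'.2.2.1 (m - i % m - 1) (by omega)).2
        have h1 : m - i % m - 1 + 1 = m - i % m := by omega
        rw [h1] at hred
        have h2 : m - (i % m + 1) = m - i % m - 1 := by omega
        rw [h2]
        intro hEq
        apply hred
        rw [← hbar_invol (c'.1 (m - i % m)), ← hEq]
    · -- base point
      show c'.1 (m - 0 % m) = e
      rw [Nat.zero_mod, Nat.sub_zero]
      have ha := c'.2.2.2 0
      rw [zero_add] at ha
      exact ha
  left_inv c := by
    apply Subtype.ext
    apply Subtype.ext
    funext i
    show (if m - i % m ≤ m then c.1.1 (m - (m - i % m)) else e) = c.1.1 i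
    have hs : i % m < m := Nat.mod_lt _ hm
    rw [if_pos (by omega), show m - (m - i % m) = i % m from by omega]
    exact (isPer_mod c.1.2.1.2 i).symm
  right_inv c' := by
    apply Subtype.ext
    funext j
    show (if j ≤ m then c'.1 (m - (m - j) % m) else e) = c'.1 j
    by_cases hj : j ≤ m
    · rw [if_pos hj]
      by_cases hj0 : j = 0
      · subst hj0
        rw [Nat.sub_zero, Nat.mod_self, Nat.sub_zero]
        have ha := c'.2.2.2 0
        rw [zero_add] at ha
        rw [ha, c'.2.1]
      · rw [Nat.mod_eq_of_lt (by omega), show m - (m - j) = j from by omega]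
    · rw [if_neg hj]
      have ha := c'.2.2.2 (j - m)
      rw [show j - m + m = j from by omega] at ha
      rw [ha]
end Closed

end TraceAux3

namespace TraceAux4
open TraceAux TraceAux2
open scoped ENNReal

section PerClass

variable {V E Γ : Type*} [Group Γ] [MulAction Γ V] [MulAction Γ E]
variable {o t : E → V} {bar : E → E} {m : ℕ}

/-- Members of the path space are `m`-periodic. -/
theorem per_of_closed {c : ℕ → E} (hc : IsClosedPath o t m c) : IsPer c m := hc.2

theorem per_shift_mod {c : ℕ → E} (hper : IsPer c m) (k : ℕ) (i : ℕ) :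
    c (i + k) = c (i + k % m) := by
  have h1 : i + k = (i + k % m) + (k / m) * m := by
    have := Nat.mod_add_div' k m; omega
  rw [h1, isPer_mul hper]

section Kappa

variable {c : ℕ → E} (hm : 0 < m) (hper : IsPer c m)

/-- The shift amount (mod `effLen c`) of an element of the cyclic stabilizer. -/
def kappa (δ : ↥(cycStab Γ c)) : ℕ := Classical.choose δ.2 % effLen c

include hm hper

theorem kappa_lt (δ : ↥(cycStab Γ c)) : kappa δ < effLen c :=
  Nat.mod_lt _ (effLen_mem hm hper).1

theorem kappa_spec (δ : ↥(cycStab Γ c)) : ∀ i, (δ : Γ) • c i = c (i + kappa δ) := by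
  intro i
  rw [Classical.choose_spec δ.2 i]
  exact shift_eq_of_mod hm hper (by rw [kappa, Nat.mod_mod]) i

theorem kappa_unique (δ : ↥(cycStab Γ c)) {k : ℕ} (hk : ∀ i, (δ : Γ) • c i = c (i + k)) :
    k % effLen c = kappa δ := by
  have h1 : ∀ i, c (i + k) = c (i + kappa δ) := by
    intro i
    rw [← hk i, kappa_spec hm hper δ i]
  have := mod_eq_of_shift hm hper h1
  rwa [show kappa δ % effLen c = kappa δ from
    Nat.mod_eq_of_lt (kappa_lt hm hper δ)] at this

theorem one_mem_cycStab : (1 : Γ) ∈ cycStab Γ c :=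
  ⟨0, fun i => by simp⟩

theorem cycStab_finite (hstab : ∀ v : V, Finite (MulAction.stabilizer Γ v))
    (ho_smul : ∀ (γ : Γ) (e : E), o (γ • e) = γ • o e) :
    Finite ↥(cycStab Γ c) := by
  set l := effLen c with hl
  have hl0 : 0 < l := (effLen_mem hm hper).1
  let θ : ↥(cycStab Γ c) → Fin l := fun δ => ⟨kappa δ, kappa_lt hm hper δ⟩
  haveI : ∀ k : Fin l, Finite {δ : ↥(cycStab Γ c) // θ δ = k} := by
    intro k
    rcases isEmpty_or_nonempty {δ : ↥(cycStab Γ c) // θ δ = k} with h | ⟨⟨δ₀, hδ₀⟩⟩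
    · infer_instance
    · haveI := stab_edge_finite hstab ho_smul (c 0)
      refine Finite.of_injective (fun δ =>
        (⟨(δ₀ : Γ)⁻¹ * δ.1.1, ?_⟩ : MulAction.stabilizer Γ (c 0))) ?_
      · have h1 : (δ.1 : Γ) • c 0 = c (0 + kappa δ.1) := kappa_spec hm hper δ.1 0
        have h2 : (δ₀ : Γ) • c 0 = c (0 + kappa δ₀) := kappa_spec hm hper δ₀ 0
        have h3 : kappa δ.1 = kappa δ₀ := by
          have := δ.2
          have h4 : kappa δ.1 = (k : ℕ) := congrArg Fin.val δ.2
          have h5 : kappa δ₀ = (k : ℕ) := congrArg Fin.val hδ₀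
          rw [h4, h5]
        show ((δ₀ : Γ)⁻¹ * (δ.1 : Γ)) • c 0 = c 0
        rw [mul_smul, h1, h3, ← h2, inv_smul_smul]
      · intro a b hab
        have : (δ₀ : Γ)⁻¹ * (a.1 : Γ) = (δ₀ : Γ)⁻¹ * (b.1 : Γ) := congrArg Subtype.val hab
        exact Subtype.ext (Subtype.ext (mul_left_cancel this))
  exact Finite.of_equiv _ (Equiv.sigmaFiberEquiv θ)

end Kappa

end PerClass

end TraceAux4

namespace TraceAux4
open TraceAux TraceAux2
open scoped ENNReal

theorem mod_helper1 {m k1 k : ℕ} (hk1 : k1 < m) (hk : k < m) :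
    (k1 + (m - k1 + k) % m) % m = k := by
  by_cases hsm : m - k1 + k < m
  · rw [Nat.mod_eq_of_lt hsm, show k1 + (m - k1 + k) = m + k from by omega,
      Nat.add_mod_left, Nat.mod_eq_of_lt hk]
  · have h1 : (m - k1 + k) % m = m - k1 + k - m := by
      rw [Nat.mod_eq_sub_mod (by omega)]
      exact Nat.mod_eq_of_lt (by omega)
    rw [h1, show k1 + (m - k1 + k - m) = k from by omega, Nat.mod_eq_of_lt hk]

theorem mod_helper2 {m k1 k' : ℕ} (hk1 : k1 < m) (hk : k' < m) :
    (m - k1 + (k1 + k') % m) % m = k' := by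
  by_cases hsm : k1 + k' < m
  · rw [Nat.mod_eq_of_lt hsm, show m - k1 + (k1 + k') = m + k' from by omega,
      Nat.add_mod_left, Nat.mod_eq_of_lt hk]
  · have h1 : (k1 + k') % m = k1 + k' - m := by
      rw [Nat.mod_eq_sub_mod (by omega)]
      exact Nat.mod_eq_of_lt (by omega)
    rw [h1, show m - k1 + (k1 + k' - m) = k' from by omega, Nat.mod_eq_of_lt hk]

section KEquiv

variable {V E Γ : Type*} [Group Γ] [MulAction Γ V] [MulAction Γ E]
variable {o t : E → V} {bar : E → E} {m : ℕ} {c : ℕ → E}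

/-- The subset of `Fin m × Γ` fixing the based cycle `c`. -/
def KType (Γ : Type*) [Group Γ] [MulAction Γ E] (m : ℕ) (c : ℕ → E) : Type _ :=
  {p : Fin m × Γ // ∀ i, p.2 • c (i + (p.1 : ℕ)) = c i}

/-- The fixing set is a product of the cyclic stabilizer and a cyclic group of order
`m / effLen c`. -/
def kTypeEquiv (hm : 0 < m) (hper : IsPer c m) :
    KType (E := E) Γ m c ≃ ↥(cycStab Γ c) × Fin (m / effLen c) := by
  have hl0 : 0 < effLen c := (effLen_mem hm hper).1
  have hldvd : effLen c ∣ m := effLen_dvd hm hper hper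
  have hlper : IsPer c (effLen c) := (effLen_mem hm hper).2
  refine ⟨fun p => ⟨⟨p.1.2⁻¹, (p.1.1 : ℕ), fun i => ?_⟩,
      ⟨(p.1.1 : ℕ) / effLen c, Nat.div_lt_div_of_lt_of_dvd hldvd p.1.1.2⟩⟩,
    fun q => ⟨⟨⟨kappa q.1 + (q.2 : ℕ) * effLen c, ?_⟩, (q.1 : Γ)⁻¹⟩, fun i => ?_⟩, ?_, ?_⟩
  · rw [← p.2 i, inv_smul_smul]
  · -- bound : kappa + j * l < m
    obtain ⟨qq, hqq⟩ := hldvd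
    have h1 : kappa q.1 < effLen c := kappa_lt hm hper q.1
    have h2 : (q.2 : ℕ) < m / effLen c := q.2.2
    have h3 : m / effLen c = qq := by rw [hqq, Nat.mul_div_cancel_left _ hl0]
    have h4 : (q.2 : ℕ) * effLen c ≤ (qq - 1) * effLen c :=
      Nat.mul_le_mul_right _ (by omega)
    have h5 : (qq - 1) * effLen c + effLen c = qq * effLen c := by
      have : qq ≥ 1 := by
        rcases Nat.eq_zero_or_pos qq with h | h
        · subst h; simp at hqq; omega
        · exact h
      calc (qq - 1) * effLen c + effLen c = (qq - 1 + 1) * effLen c := by ring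
        _ = qq * effLen c := by rw [Nat.sub_add_cancel this]
    have h6 : qq * effLen c = m := by rw [hqq, Nat.mul_comm]
    omega
  · -- membership : (q.1)⁻¹ • c (i + (kappa + j*l)) = c i
    show (q.1 : Γ)⁻¹ • c (i + (kappa q.1 + (q.2 : ℕ) * effLen c)) = c i
    have h1 : i + (kappa q.1 + (q.2 : ℕ) * effLen c) = (i + kappa q.1) + (q.2 : ℕ) * effLen c := by
      omega
    rw [h1, isPer_mul hlper, ← kappa_spec hm hper q.1 i, inv_smul_smul]
  · -- left inverse
    rintro ⟨⟨k, γ⟩, hp⟩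
    have hwit : ∀ i, ((⟨γ⁻¹, (k : ℕ), fun i => by rw [← hp i, inv_smul_smul]⟩ :
        ↥(cycStab Γ c)) : Γ) • c i = c (i + (k : ℕ)) := fun i => by
      show γ⁻¹ • c i = c (i + (k : ℕ))
      rw [← hp i, inv_smul_smul]
    have hkap := kappa_unique hm hper _ hwit
    apply Subtype.ext
    apply Prod.ext
    · apply Fin.ext
      show kappa _ + (k : ℕ) / effLen c * effLen c = (k : ℕ)
      rw [← hkap]
      exact Nat.mod_add_div' _ _
    · show γ⁻¹⁻¹ = γ
      exact inv_inv γ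
  · -- right inverse
    rintro ⟨δ, j⟩
    have h1 : kappa δ < effLen c := kappa_lt hm hper δ
    apply Prod.ext
    · apply Subtype.ext
      show ((δ : Γ)⁻¹)⁻¹ = (δ : Γ)
      exact inv_inv _
    · apply Fin.ext
      show (kappa δ + (j : ℕ) * effLen c) / effLen c = (j : ℕ)
      rw [Nat.add_mul_div_right _ _ hl0, Nat.div_eq_of_lt h1, Nat.zero_add]

end KEquiv

end TraceAux4

namespace TraceAux5
open TraceAux TraceAux2 TraceAux4
open scoped ENNReal

theorem tsum_fiber_split {α β : Type*} (f : α → β) (g : α → ℝ≥0∞) :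
    ∑' a, g a = ∑' b : β, ∑' x : {a // f a = b}, g x.1 := by
  rw [← (Equiv.sigmaFiberEquiv f).tsum_eq g]
  exact ENNReal.tsum_sigma' _

theorem tsum_const_card {α : Type*} [Finite α] (a : ℝ≥0∞) :
    ∑' _ : α, a = (Nat.card α : ℝ≥0∞) * a := by
  haveI : Fintype α := Fintype.ofFinite _
  rw [tsum_fintype, Finset.sum_const, Finset.card_univ, Nat.card_eq_fintype_card, nsmul_eq_mul]

section ClassSum

variable {V E Γ : Type*} [Group Γ] [MulAction Γ V] [MulAction Γ E]
variable {o t : E → V} {bar : E → E} {m : ℕ}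

/-- The shifted-translated path. -/
def pathMk (ho_smul : ∀ (γ : Γ) (e : E), o (γ • e) = γ • o e)
    (ht_smul : ∀ (γ : Γ) (e : E), t (γ • e) = γ • t e)
    (hbar_smul : ∀ (γ : Γ) (e : E), bar (γ • e) = γ • bar e)
    (c₀ : {c : ℕ → E // IsClosedPath o t m c ∧ IsReducedPath bar c}) (x : Fin m × Γ) :
    {c : ℕ → E // IsClosedPath o t m c ∧ IsReducedPath bar c} :=
  ⟨fun i => x.2 • c₀.1 (i + (x.1 : ℕ)),
    closed_smul ho_smul ht_smul (closed_shift c₀.2.1 (x.1 : ℕ)) x.2,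
    reduced_smul hbar_smul (reduced_shift c₀.2.2 (x.1 : ℕ)) x.2⟩

variable (ho_smul : ∀ (γ : Γ) (e : E), o (γ • e) = γ • o e)
variable (ht_smul : ∀ (γ : Γ) (e : E), t (γ • e) = γ • t e)
variable (hbar_smul : ∀ (γ : Γ) (e : E), bar (γ • e) = γ • bar e)
variable (hm : 0 < m)

include hm in
theorem fiber_equiv_nonempty
    (c₀ c : {c : ℕ → E // IsClosedPath o t m c ∧ IsReducedPath bar c})
    (hrel : ∃ (γ : Γ) (k : ℕ), ∀ i, c.1 i = γ • c₀.1 (i + k)) :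
    Nonempty ({x : Fin m × Γ // pathMk ho_smul ht_smul hbar_smul c₀ x = c} ≃
      KType Γ m c₀.1) := by
  have hper : IsPer c₀.1 m := c₀.2.1.2
  obtain ⟨γ₁, k₁, hc⟩ := hrel
  set k1 := k₁ % m with hk1def
  have hk1m : k1 < m := Nat.mod_lt _ hm
  have hc' : ∀ i, c.1 i = γ₁ • c₀.1 (i + k1) := fun i => by
    rw [hc i, per_shift_mod hper k₁ i]
  refine ⟨⟨fun x => ⟨(⟨(m - k1 + (x.1.1 : ℕ)) % m, Nat.mod_lt _ hm⟩, γ₁⁻¹ * x.1.2),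
      fun i => ?_⟩,
    fun q => ⟨(⟨(k1 + (q.1.1 : ℕ)) % m, Nat.mod_lt _ hm⟩, γ₁ * q.1.2), ?_⟩, ?_, ?_⟩⟩
  · -- forward membership
    have hx' : ∀ i, x.1.2 • c₀.1 (i + (x.1.1 : ℕ)) = c.1 i := fun i =>
      congrFun (congrArg Subtype.val x.2) i
    show (γ₁⁻¹ * x.1.2) • c₀.1 (i + (m - k1 + (x.1.1 : ℕ)) % m) = c₀.1 i
    have e1 : c₀.1 (i + (m - k1 + (x.1.1 : ℕ)) % m) = c₀.1 (i + (m - k1 + (x.1.1 : ℕ))) :=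
      (per_shift_mod hper _ i).symm
    have e2 : i + (m - k1 + (x.1.1 : ℕ)) = (i + m - k1) + (x.1.1 : ℕ) := by omega
    rw [mul_smul, e1, e2, hx' (i + m - k1), hc' (i + m - k1), inv_smul_smul,
      show i + m - k1 + k1 = i + m from by omega, hper i]
  · -- backward membership : pathMk = c
    apply Subtype.ext
    funext i
    show (γ₁ * q.1.2) • c₀.1 (i + (k1 + (q.1.1 : ℕ)) % m) = c.1 i
    have e1 : c₀.1 (i + (k1 + (q.1.1 : ℕ)) % m) = c₀.1 (i + (k1 + (q.1.1 : ℕ))) :=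
      (per_shift_mod hper _ i).symm
    have e2 : i + (k1 + (q.1.1 : ℕ)) = (i + k1) + (q.1.1 : ℕ) := by omega
    rw [mul_smul, e1, e2, q.2 (i + k1), ← hc' i]
  · -- left inverse
    rintro ⟨⟨k, γ⟩, hx⟩
    apply Subtype.ext
    apply Prod.ext
    · apply Fin.ext
      show (k1 + (m - k1 + (k : ℕ)) % m) % m = (k : ℕ)
      exact mod_helper1 hk1m k.2
    · show γ₁ * (γ₁⁻¹ * γ) = γ
      rw [← mul_assoc, mul_inv_cancel, one_mul]
  · -- right inverse
    rintro ⟨⟨k', γ'⟩, hq⟩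
    apply Subtype.ext
    apply Prod.ext
    · apply Fin.ext
      show (m - k1 + (k1 + (k' : ℕ)) % m) % m = (k' : ℕ)
      exact mod_helper2 hk1m k'.2
    · show γ₁⁻¹ * (γ₁ * γ') = γ'
      rw [← mul_assoc, inv_mul_cancel, one_mul]

include ho_smul ht_smul hbar_smul hm in
theorem class_sum (hstab : ∀ v : V, Finite (MulAction.stabilizer Γ v))
    (F1 : Set E) (hF1 : ∀ e : E, ∃! f, f ∈ F1 ∧ ∃ γ : Γ, γ • e = f)
    (ξ : Quot (Rel o t bar m Γ)) :
    ∑' c : {c : {c : ℕ → E // IsClosedPath o t m c ∧ IsReducedPath bar c} //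
        Quot.mk (Rel o t bar m Γ) c = ξ}, Wt Γ F1 (c.1.1 0)
      = (effLen (Quot.out ξ).1 : ℝ≥0∞) / (Nat.card ↥(cycStab Γ (Quot.out ξ).1) : ℝ≥0∞) := by
  classical
  set c₀ := Quot.out ξ with hc₀
  have hper : IsPer c₀.1 m := c₀.2.1.2
  set l := effLen c₀.1 with hldef
  have hl0 : 0 < l := (effLen_mem hm hper).1
  have hldvd : l ∣ m := effLen_dvd hm hper hper
  set q := m / l with hqdef
  have hq0 : 0 < q := Nat.div_pos (Nat.le_of_dvd hm hldvd) hl0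
  have hlq : l * q = m := Nat.mul_div_cancel' hldvd
  haveI hSfin : Finite ↥(cycStab Γ c₀.1) := cycStab_finite hm hper hstab ho_smul
  haveI : Nonempty ↥(cycStab Γ c₀.1) := ⟨⟨1, one_mem_cycStab hm hper⟩⟩
  set S := Nat.card ↥(cycStab Γ c₀.1) with hSdef
  have hS0 : 0 < S := Nat.card_pos
  set C := {c : {c : ℕ → E // IsClosedPath o t m c ∧ IsReducedPath bar c} //
      Quot.mk (Rel o t bar m Γ) c = ξ} with hCdef
  set Φ : Fin m × Γ → C := fun x =>
    ⟨pathMk ho_smul ht_smul hbar_smul c₀ x, by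
      refine (Quot.sound ?_).symm.trans (Quot.out_eq ξ)
      exact ⟨x.2, (x.1 : ℕ), fun i => rfl⟩⟩ with hΦdef
  -- each fiber of Φ is equivalent to KType
  have hrel : ∀ c : C, ∃ (γ : Γ) (k : ℕ), ∀ i, c.1.1 i = γ • c₀.1 (i + k) := by
    intro c
    have h1 : Quot.mk (Rel o t bar m Γ) c₀ = Quot.mk (Rel o t bar m Γ) c.1 :=
      (Quot.out_eq ξ).trans c.2.symm
    have h2 : Rel o t bar m Γ c₀ c.1 :=
      ((rel_equiv hm).eqvGen_iff).1 (Quot.eqvGen_exact h1)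
    exact h2
  have hfibeq : ∀ c : C, Nonempty ({x : Fin m × Γ // Φ x = c} ≃ KType Γ m c₀.1) := by
    intro c
    obtain ⟨ee⟩ := fiber_equiv_nonempty ho_smul ht_smul hbar_smul hm c₀ c.1 (hrel c)
    refine ⟨(Equiv.subtypeEquivRight fun x => ?_).trans ee⟩
    constructor
    · intro h; exact congrArg Subtype.val h
    · intro h; exact Subtype.ext h
  have hKcard : Nat.card (KType Γ m c₀.1) = S * q := by
    rw [Nat.card_congr (kTypeEquiv hm hper), Nat.card_prod, Nat.card_eq_fintype_card (α := Fin (m / effLen c₀.1)),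
      Fintype.card_fin]
  haveI hKfin : Finite (KType Γ m c₀.1) :=
    Finite.of_equiv _ (kTypeEquiv (Γ := Γ) hm hper).symm
  haveI hfibfin : ∀ c : C, Finite {x : Fin m × Γ // Φ x = c} := fun c =>
    Finite.of_equiv _ (hfibeq c).some.symm
  have hfibcard : ∀ c : C, Nat.card {x : Fin m × Γ // Φ x = c} = S * q := fun c => by
    rw [Nat.card_congr (hfibeq c).some, hKcard]
  -- main computation
  have hmain : (m : ℝ≥0∞) = ((S * q : ℕ) : ℝ≥0∞) * ∑' c : C, Wt Γ F1 (c.1.1 0) := by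
    calc (m : ℝ≥0∞) = ∑' _ : Fin m, (1 : ℝ≥0∞) := by
          rw [tsum_const_card, Nat.card_eq_fintype_card, Fintype.card_fin, mul_one]
      _ = ∑' k : Fin m, ∑' γ : Γ, Wt Γ F1 (γ • c₀.1 (0 + (k : ℕ))) := by
          refine tsum_congr fun k => ?_
          rw [orbit_weight_sum hstab ho_smul F1 hF1 (c₀.1 (0 + (k : ℕ)))]
      _ = ∑' x : Fin m × Γ, Wt Γ F1 ((Φ x).1.1 0) := (ENNReal.tsum_prod' (f := fun x =>
          Wt Γ F1 ((Φ x).1.1 0))).symm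
      _ = ∑' p : (Σ c : C, {x : Fin m × Γ // Φ x = c}), Wt Γ F1 ((Φ p.2.1).1.1 0) :=
          ((Equiv.sigmaFiberEquiv Φ).tsum_eq fun x => Wt Γ F1 ((Φ x).1.1 0)).symm
      _ = ∑' c : C, ∑' x : {x : Fin m × Γ // Φ x = c}, Wt Γ F1 ((Φ x.1).1.1 0) :=
          ENNReal.tsum_sigma' _
      _ = ∑' c : C, ∑' _ : {x : Fin m × Γ // Φ x = c}, Wt Γ F1 (c.1.1 0) := by
          refine tsum_congr fun c => tsum_congr fun x => ?_
          rw [x.2]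
      _ = ∑' c : C, ((S * q : ℕ) : ℝ≥0∞) * Wt Γ F1 (c.1.1 0) := by
          refine tsum_congr fun c => ?_
          rw [tsum_const_card, hfibcard c]
      _ = ((S * q : ℕ) : ℝ≥0∞) * ∑' c : C, Wt Γ F1 (c.1.1 0) := ENNReal.tsum_mul_left
  -- conclude
  rw [ENNReal.eq_div_iff (by exact_mod_cast hS0.ne') (by simp)]
  have hq : ((q : ℕ) : ℝ≥0∞) ≠ 0 := by exact_mod_cast hq0.ne'
  refine (ENNReal.mul_right_inj hq (by simp)).1 ?_
  calc ((q : ℕ) : ℝ≥0∞) * ((S : ℕ) * ∑' c : C, Wt Γ F1 (c.1.1 0))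
      = ((S * q : ℕ) : ℝ≥0∞) * ∑' c : C, Wt Γ F1 (c.1.1 0) := by
        push_cast; ring
    _ = (m : ℝ≥0∞) := hmain.symm
    _ = ((q : ℕ) : ℝ≥0∞) * (l : ℝ≥0∞) := by
        rw [← hlq]; push_cast; ring

end ClassSum

end TraceAux5

open TraceAux TraceAux2 TraceAux3 TraceAux4 TraceAux5 in
open scoped ENNReal NNReal in
/-- Proposition 2.6 (iii): `Tr_Γ(T^m) = N_m^Γ`, where
`N_m^Γ = Σ_ξ ℓ(ξ)/S(ξ)` over the `Γ`-equivalence classes `ξ` of reduced cycles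
of length `m` (the sum converging). -/
theorem trace_Tm_eq_Nm
    {V E Γ : Type*} [Countable V] [Countable E] [DecidableEq E]
    [Group Γ] [Countable Γ] [MulAction Γ V] [MulAction Γ E]
    -- the graph in the sense of Serre, connected, with degrees bounded by d
    (o t : E → V) (bar : E → E)
    (hbar_invol : ∀ e, bar (bar e) = e)
    (hbar_ne : ∀ e, bar e ≠ e)
    (ho_bar : ∀ e, o (bar e) = t e)
    (hconn : ∀ u v : V, Relation.ReflTransGen (fun a b => ∃ e, o e = a ∧ t e = b) u v)
    (d : ℕ) (hfib : ∀ v, {e | o e = v}.Finite)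
    (hdeg : ∀ v, Nat.card {e // o e = v} ≤ d)
    -- Γ acts by automorphisms of the graph
    (ho_smul : ∀ (γ : Γ) (e : E), o (γ • e) = γ • o e)
    (ht_smul : ∀ (γ : Γ) (e : E), t (γ • e) = γ • t e)
    (hbar_smul : ∀ (γ : Γ) (e : E), bar (γ • e) = γ • bar e)
    -- without inversions
    (hnoinv : ∀ (γ : Γ) (e : E), γ • e ≠ bar e)
    -- discretely (finite vertex stabilizers)
    (hstab : ∀ v : V, Finite (MulAction.stabilizer Γ v))
    -- bounded covolume, w.r.t. a set 𝓕₁ of representatives of the Γ-orbits of edges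
    (F1 : Set E) (hF1 : ∀ e : E, ∃! f, f ∈ F1 ∧ ∃ γ : Γ, γ • e = f)
    (hcovol : Summable fun e : F1 => (1 : ℝ) / Nat.card (MulAction.stabilizer Γ (e : E)))
    -- the operator T on ℓ²(EX)
    (T : lp (fun _ : E => ℂ) 2 →L[ℂ] lp (fun _ : E => ℂ) 2)
    (hT : ∀ (ω : lp (fun _ : E => ℂ) 2) (e : E),
      T ω e = ∑' e' : {e' : E // t e' = o e ∧ e' ≠ bar e}, ω (e' : E))
    (m : ℕ) (hm : 1 ≤ m) :
    -- N_m^Γ converges: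
    Summable (fun ξ : Quot (fun c c' : {c : ℕ → E //
          IsClosedPath o t m c ∧ IsReducedPath bar c} =>
        ∃ (γ : Γ) (k : ℕ), ∀ i, (c' : ℕ → E) i = γ • (c : ℕ → E) (i + k)) =>
      (effLen (ξ.out : ℕ → E) : ℝ) / Nat.card (cycStab Γ (ξ.out : ℕ → E))) ∧
    -- the trace of T^m is an absolutely convergent sum:
    Summable (fun e : F1 => (1 : ℂ) / Nat.card (MulAction.stabilizer Γ (e : E)) *
      ((T ^ m) (lp.single 2 (e : E) 1)) (e : E)) ∧
    -- Tr_Γ(T^m) = N_m^Γ: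
    ∑' e : F1, (1 : ℂ) / Nat.card (MulAction.stabilizer Γ (e : E)) *
        ((T ^ m) (lp.single 2 (e : E) 1)) (e : E) =
      ((∑' ξ : Quot (fun c c' : {c : ℕ → E //
            IsClosedPath o t m c ∧ IsReducedPath bar c} =>
          ∃ (γ : Γ) (k : ℕ), ∀ i, (c' : ℕ → E) i = γ • (c : ℕ → E) (i + k)),
        (effLen (ξ.out : ℕ → E) : ℝ) / Nat.card (cycStab Γ (ξ.out : ℕ → E)) : ℝ) : ℂ) := by
  classical
  have hm0 : 0 < m := hm
  -- the count of based closed reduced paths at `e`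
  set N : E → ℕ := fun e => Nat.card (SeqT o t bar m e e) with hNdef
  -- stabilizer cardinalities are positive
  have hstabfin : ∀ e : E, Finite (MulAction.stabilizer Γ e) :=
    fun e => stab_edge_finite hstab ho_smul e
  have hstabpos : ∀ e : E, 0 < Nat.card (MulAction.stabilizer Γ e) := fun e => by
    haveI := hstabfin e
    exact Nat.card_pos
  -- closedEquiv : based paths ≃ SeqT
  have hNcard : ∀ e : E,
      Nat.card {c : {c : ℕ → E // IsClosedPath o t m c ∧ IsReducedPath bar c} // c.1 0 = e}
        = N e := fun e => Nat.card_congr (closedEquiv hm0 hbar_invol e)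
  have hNfin : ∀ e : E,
      Finite {c : {c : ℕ → E // IsClosedPath o t m c ∧ IsReducedPath bar c} // c.1 0 = e} :=
    fun e => by
      haveI := seqT_finite hfib hbar_invol ho_bar m e e
      exact Finite.of_equiv _ (closedEquiv hm0 hbar_invol e).symm
  -- ENNReal versions
  set wA : ↥F1 → ℝ≥0∞ := fun e =>
    (N e : ℝ≥0∞) * ((Nat.card (MulAction.stabilizer Γ (e : E)) : ℝ≥0∞))⁻¹ with hwAdef
  set wC : Quot (Rel o t bar m Γ) → ℝ≥0∞ := fun ξ =>
    (effLen (Quot.out ξ).1 : ℝ≥0∞) / (Nat.card ↥(cycStab Γ (Quot.out ξ).1) : ℝ≥0∞) with hwCdef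
  -- Step A : the ENNReal identity
  have hENN : ∑' e : ↥F1, wA e = ∑' ξ : Quot (Rel o t bar m Γ), wC ξ := by
    have h1 : ∀ ξ : Quot (Rel o t bar m Γ), wC ξ =
        ∑' c : {c : {c : ℕ → E // IsClosedPath o t m c ∧ IsReducedPath bar c} //
          Quot.mk (Rel o t bar m Γ) c = ξ}, Wt Γ F1 (c.1.1 0) :=
      fun ξ => (class_sum ho_smul ht_smul hbar_smul hm0 hstab F1 hF1 ξ).symm
    have step1 : ∑' c : {c : ℕ → E // IsClosedPath o t m c ∧ IsReducedPath bar c},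
        Wt Γ F1 (c.1 0)
        = ∑' ξ : Quot (Rel o t bar m Γ),
            ∑' x : {c : {c : ℕ → E // IsClosedPath o t m c ∧ IsReducedPath bar c} //
              Quot.mk (Rel o t bar m Γ) c = ξ}, Wt Γ F1 (x.1.1 0) :=
      tsum_fiber_split _ _
    have step2 : ∑' c : {c : ℕ → E // IsClosedPath o t m c ∧ IsReducedPath bar c},
        Wt Γ F1 (c.1 0)
        = ∑' e : E, ∑' x : {c : {c : ℕ → E // IsClosedPath o t m c ∧ IsReducedPath bar c} //
            c.1 0 = e}, Wt Γ F1 (x.1.1 0) :=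
      tsum_fiber_split (fun c : {c : ℕ → E // IsClosedPath o t m c ∧ IsReducedPath bar c} => c.1 0) _
    have h4 : ∀ e : E,
        (∑' x : {c : {c : ℕ → E // IsClosedPath o t m c ∧ IsReducedPath bar c} //
            c.1 0 = e}, Wt Γ F1 (x.1.1 0))
        = F1.indicator (fun e => (N e : ℝ≥0∞) *
            ((Nat.card (MulAction.stabilizer Γ e) : ℝ≥0∞))⁻¹) e := by
      intro e
      haveI := hNfin e
      have hc : ∀ x : {c : {c : ℕ → E // IsClosedPath o t m c ∧ IsReducedPath bar c} //
          c.1 0 = e}, Wt Γ F1 (x.1.1 0) = Wt Γ F1 e := fun x => congrArg (Wt Γ F1) x.2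
      rw [tsum_congr hc, tsum_const_card, hNcard e]
      by_cases he : e ∈ F1
      · rw [Set.indicator_of_mem he, Wt, Set.indicator_of_mem he]
      · rw [Set.indicator_of_notMem he, Wt, Set.indicator_of_notMem he, mul_zero]
    calc ∑' e : ↥F1, wA e
        = ∑' e : E, F1.indicator (fun e => (N e : ℝ≥0∞) *
            ((Nat.card (MulAction.stabilizer Γ e) : ℝ≥0∞))⁻¹) e :=
          by
            rw [hwAdef]
            exact tsum_subtype F1 (fun e => (N e : ℝ≥0∞) *
              ((Nat.card (MulAction.stabilizer Γ e) : ℝ≥0∞))⁻¹)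
      _ = ∑' e : E, ∑' x : {c : {c : ℕ → E // IsClosedPath o t m c ∧ IsReducedPath bar c} //
            c.1 0 = e}, Wt Γ F1 (x.1.1 0) := (tsum_congr h4).symm
      _ = ∑' c : {c : ℕ → E // IsClosedPath o t m c ∧ IsReducedPath bar c},
            Wt Γ F1 (c.1 0) := step2.symm
      _ = ∑' ξ : Quot (Rel o t bar m Γ),
            ∑' x : {c : {c : ℕ → E // IsClosedPath o t m c ∧ IsReducedPath bar c} //
              Quot.mk (Rel o t bar m Γ) c = ξ}, Wt Γ F1 (x.1.1 0) := step1
      _ = ∑' ξ : Quot (Rel o t bar m Γ), wC ξ := (tsum_congr h1).symm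
  -- Step B : finiteness
  have hinv_ne_top : ∑' e : ↥F1,
      ((Nat.card (MulAction.stabilizer Γ (e : E)) : ℝ≥0∞))⁻¹ ≠ ∞ := by
    have hsnn : Summable (fun e : ↥F1 =>
        ((Nat.card (MulAction.stabilizer Γ (e : E)) : ℝ≥0))⁻¹) := by
      rw [← NNReal.summable_coe]
      refine hcovol.congr fun e => ?_
      rw [NNReal.coe_inv, NNReal.coe_natCast, one_div]
    have := ENNReal.tsum_coe_ne_top_iff_summable.2 hsnn
    refine ne_of_eq_of_ne (tsum_congr fun e => ?_).symm this
    rw [ENNReal.coe_inv (by exact_mod_cast (hstabpos (e : E)).ne'), ENNReal.coe_natCast]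
  have hA_ne_top : ∑' e : ↥F1, wA e ≠ ∞ := by
    have hle : ∀ e : ↥F1, wA e ≤ (d ^ m : ℕ) *
        ((Nat.card (MulAction.stabilizer Γ (e : E)) : ℝ≥0∞))⁻¹ := by
      intro e
      refine mul_le_mul_left ?_ _
      exact_mod_cast seqT_card_le hfib hbar_invol ho_bar d hdeg m (e : E) (e : E)
    refine ne_top_of_le_ne_top ?_ (Summable.tsum_le_tsum hle ENNReal.summable ENNReal.summable)
    rw [ENNReal.tsum_mul_left]
    exact ENNReal.mul_ne_top (by simp) hinv_ne_top
  have hC_ne_top : ∑' ξ : Quot (Rel o t bar m Γ), wC ξ ≠ ∞ := hENN ▸ hA_ne_top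
  -- terms are finite
  have hwA_ne_top : ∀ e : ↥F1, wA e ≠ ∞ := fun e =>
    ENNReal.mul_ne_top (ENNReal.natCast_ne_top _)
      (ENNReal.inv_ne_top.2 (by exact_mod_cast (hstabpos (e : E)).ne'))
  have hwC_ne_top : ∀ ξ : Quot (Rel o t bar m Γ), wC ξ ≠ ∞ := by
    intro ξ
    have hper : IsPer (Quot.out ξ).1 m := (Quot.out ξ).2.1.2
    haveI : Finite ↥(cycStab Γ (Quot.out ξ).1) := cycStab_finite hm0 hper hstab ho_smul
    haveI : Nonempty ↥(cycStab Γ (Quot.out ξ).1) := ⟨⟨1, one_mem_cycStab hm0 hper⟩⟩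
    have hS0 : (0 : ℕ) < Nat.card ↥(cycStab Γ (Quot.out ξ).1) := Nat.card_pos
    show (effLen (Quot.out ξ).1 : ℝ≥0∞) / (Nat.card ↥(cycStab Γ (Quot.out ξ).1) : ℝ≥0∞) ≠ ∞
    rw [div_eq_mul_inv]
    exact ENNReal.mul_ne_top (ENNReal.natCast_ne_top _)
      (ENNReal.inv_ne_top.2 (by exact_mod_cast hS0.ne'))
  -- toReal identities
  have htoA : ∀ e : ↥F1, (wA e).toReal =
      ((Nat.card (MulAction.stabilizer Γ (e : E)) : ℝ))⁻¹ * (N (e : E) : ℝ) := by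
    intro e
    rw [hwAdef]
    rw [ENNReal.toReal_mul, ENNReal.toReal_inv, ENNReal.toReal_natCast,
      ENNReal.toReal_natCast, mul_comm]
  have htoC : ∀ ξ : Quot (Rel o t bar m Γ), (wC ξ).toReal =
      (effLen (Quot.out ξ).1 : ℝ) / (Nat.card ↥(cycStab Γ (Quot.out ξ).1) : ℝ) := by
    intro ξ
    rw [hwCdef]
    rw [ENNReal.toReal_div, ENNReal.toReal_natCast, ENNReal.toReal_natCast]
  -- conclusion 1 : summability of the class sum
  have hsumC : Summable (fun ξ : Quot (Rel o t bar m Γ) =>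
      (effLen (Quot.out ξ).1 : ℝ) / (Nat.card ↥(cycStab Γ (Quot.out ξ).1) : ℝ)) :=
    (ENNReal.summable_toReal hC_ne_top).congr htoC
  -- the operator values
  have hop : ∀ e : ↥F1, (1 : ℂ) / Nat.card (MulAction.stabilizer Γ (e : E)) *
      ((T ^ m) (lp.single 2 (e : E) 1)) (e : E)
      = (((Nat.card (MulAction.stabilizer Γ (e : E)) : ℝ))⁻¹ * (N (e : E) : ℝ) : ℝ) := by
    intro e
    rw [pow_single_apply hfib hbar_invol ho_bar T hT m (e : E) (e : E)]
    push_cast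
    rw [one_div]
  -- conclusion 2 : summability of the trace
  have hsumA : Summable (fun e : ↥F1 =>
      ((Nat.card (MulAction.stabilizer Γ (e : E)) : ℝ))⁻¹ * (N (e : E) : ℝ)) :=
    (ENNReal.summable_toReal hA_ne_top).congr htoA
  have hsumT : Summable (fun e : F1 => (1 : ℂ) / Nat.card (MulAction.stabilizer Γ (e : E)) *
      ((T ^ m) (lp.single 2 (e : E) 1)) (e : E)) := by
    refine (Complex.summable_ofReal.2 hsumA).congr fun e => ?_
    rw [hop e]
  -- conclusion 3 : the equality
  refine ⟨hsumC, hsumT, ?_⟩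
  have e1 : ∑' e : F1, (1 : ℂ) / Nat.card (MulAction.stabilizer Γ (e : E)) *
      ((T ^ m) (lp.single 2 (e : E) 1)) (e : E)
      = ((∑' e : ↥F1, ((Nat.card (MulAction.stabilizer Γ (e : E)) : ℝ))⁻¹ * (N (e : E) : ℝ)
          : ℝ) : ℂ) := by
    rw [Complex.ofReal_tsum]
    exact tsum_congr fun e => hop e
  rw [e1]
  have e2 : ∑' e : ↥F1, ((Nat.card (MulAction.stabilizer Γ (e : E)) : ℝ))⁻¹ * (N (e : E) : ℝ)
      = (∑' e : ↥F1, wA e).toReal := by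
    rw [ENNReal.tsum_toReal_eq hwA_ne_top]
    exact tsum_congr fun e => (htoA e).symm
  have e3 : (∑' ξ : Quot (Rel o t bar m Γ),
      (effLen (Quot.out ξ).1 : ℝ) / (Nat.card ↥(cycStab Γ (Quot.out ξ).1) : ℝ))
      = (∑' ξ : Quot (Rel o t bar m Γ), wC ξ).toReal := by
    rw [ENNReal.tsum_toReal_eq hwC_ne_top]
    exact tsum_congr fun ξ => (htoC ξ).symm
  have efin : (∑' e : ↥F1, ((Nat.card (MulAction.stabilizer Γ (e : E)) : ℝ))⁻¹ * (N (e : E) : ℝ))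
      = ∑' ξ : Quot (Rel o t bar m Γ),
          (effLen (Quot.out ξ).1 : ℝ) / (Nat.card ↥(cycStab Γ (Quot.out ξ).1) : ℝ) := by
    rw [e2, hENN, ← e3]
  exact congrArg (fun x : ℝ => (x : ℂ)) efin
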